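/- Define alpha_t = 1 for 0 <= t <= 2 and alpha_t = (t+1)/4 for t >= 3, and let b_0, ..., b_{T-1} be reals in [0,1]. Then for T >= 2: sum_{t=0}^{T-1} alpha_t * b_t / sqrt(1 + sum_{tau=0}^t alpha_tau^2 * b_tau^2) <= 5 * sqrt(log T) * sqrt(T). -/

import Mathlib

noncomputable def alpha (t : ℕ) : ℝ := if t ≤ 2 then 1 else (t + 1) / 4

private lemma logsum (g : ℕ → ℝ) (hg : ∀ t, 0 ≤ g t) (T : ℕ) :
    ∑ t ∈ Finset.range T, g t / (1 + ∑ τ ∈ Finset.range (t + 1), g τ)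
      ≤ Real.log (1 + ∑ τ ∈ Finset.range T, g τ) := by
  have hF : ∀ n, (0:ℝ) < 1 + ∑ τ ∈ Finset.range n, g τ := by
    intro n
    have : 0 ≤ ∑ τ ∈ Finset.range n, g τ := Finset.sum_nonneg fun i _ => hg i
    linarith
  induction T with
  | zero => simp
  | succ n ih =>
    have hA := hF n
    have hB := hF (n + 1)
    have hBA : (1 + ∑ τ ∈ Finset.range (n + 1), g τ)
        = (1 + ∑ τ ∈ Finset.range n, g τ) + g n := by
      rw [Finset.sum_range_succ]; ring
    have hlog := Real.log_le_sub_one_of_pos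
      (show (0:ℝ) < (1 + ∑ τ ∈ Finset.range n, g τ) / (1 + ∑ τ ∈ Finset.range (n + 1), g τ)
        from div_pos hA hB)
    rw [Real.log_div (ne_of_gt hA) (ne_of_gt hB)] at hlog
    have hgn : g n / (1 + ∑ τ ∈ Finset.range (n + 1), g τ)
        = 1 - (1 + ∑ τ ∈ Finset.range n, g τ) / (1 + ∑ τ ∈ Finset.range (n + 1), g τ) := by
      rw [eq_sub_iff_add_eq, ← add_div, add_comm, ← hBA, div_self (ne_of_gt hB)]
    rw [Finset.sum_range_succ]
    linarith

private lemma main_lem (T : ℕ) (hT : 2 ≤ T) (c : ℕ → ℝ)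
    (hc : ∀ t < T, 0 ≤ c t) (hbound : ∀ t < T, c t ≤ (T : ℝ)) :
    ∑ t ∈ Finset.range T, c t / Real.sqrt (1 + ∑ τ ∈ Finset.range (t + 1), c τ ^ 2)
      ≤ 5 * Real.sqrt (Real.log T) * Real.sqrt T := by
  have hF : ∀ n, (0:ℝ) < 1 + ∑ τ ∈ Finset.range n, c τ ^ 2 := by
    intro n; positivity
  have hT2 : (2:ℝ) ≤ (T:ℝ) := by exact_mod_cast hT
  have hlogT : 0 ≤ Real.log T := Real.log_nonneg (by linarith)
  -- the terms, squared
  have husq : ∀ t, (c t / Real.sqrt (1 + ∑ τ ∈ Finset.range (t + 1), c τ ^ 2)) ^ 2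
      = c t ^ 2 / (1 + ∑ τ ∈ Finset.range (t + 1), c τ ^ 2) := by
    intro t
    rw [div_pow, Real.sq_sqrt (le_of_lt (hF (t + 1)))]
  -- Cauchy–Schwarz
  have hcs := Finset.sum_mul_sq_le_sq_mul_sq (Finset.range T) (fun _ => (1:ℝ))
    (fun t => c t / Real.sqrt (1 + ∑ τ ∈ Finset.range (t + 1), c τ ^ 2))
  simp only [one_mul, one_pow, Finset.sum_const, Finset.card_range, nsmul_eq_mul, mul_one] at hcs
  -- bound on sum of squares via log
  have hls := logsum (fun τ => c τ ^ 2) (fun t => sq_nonneg _) T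
  simp only [husq] at hcs
  -- bound F T ≤ T^4
  have hFb : 1 + ∑ τ ∈ Finset.range T, c τ ^ 2 ≤ (T:ℝ) ^ 4 := by
    have h1 : ∑ τ ∈ Finset.range T, c τ ^ 2 ≤ ∑ τ ∈ Finset.range T, (T:ℝ) ^ 2 := by
      refine Finset.sum_le_sum fun i hi => ?_
      have hi' := Finset.mem_range.mp hi
      have := hc i hi'
      have := hbound i hi'
      nlinarith
    rw [Finset.sum_const, Finset.card_range, nsmul_eq_mul] at h1
    have h3 : (8:ℝ) ≤ (T:ℝ) ^ 3 := by nlinarith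
    nlinarith [h1, h3, hT2]
  have hlog4 : Real.log (1 + ∑ τ ∈ Finset.range T, c τ ^ 2) ≤ 25 * Real.log T := by
    calc Real.log (1 + ∑ τ ∈ Finset.range T, c τ ^ 2)
        ≤ Real.log ((T:ℝ) ^ 4) := Real.log_le_log (hF T) hFb
      _ = 4 * Real.log T := by rw [Real.log_pow]; norm_num
      _ ≤ 25 * Real.log T := by linarith
  have hsum_nonneg : 0 ≤ ∑ t ∈ Finset.range T,
      c t / Real.sqrt (1 + ∑ τ ∈ Finset.range (t + 1), c τ ^ 2) := by
    refine Finset.sum_nonneg fun i hi => ?_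
    exact div_nonneg (hc i (Finset.mem_range.mp hi)) (Real.sqrt_nonneg _)
  have hkey : (∑ t ∈ Finset.range T,
      c t / Real.sqrt (1 + ∑ τ ∈ Finset.range (t + 1), c τ ^ 2)) ^ 2
      ≤ (T:ℝ) * (25 * Real.log T) := by
    calc (∑ t ∈ Finset.range T, c t / Real.sqrt (1 + ∑ τ ∈ Finset.range (t + 1), c τ ^ 2)) ^ 2
        ≤ (T:ℝ) * ∑ t ∈ Finset.range T, c t ^ 2 / (1 + ∑ τ ∈ Finset.range (t + 1), c τ ^ 2) :=
          hcs
      _ ≤ (T:ℝ) * (25 * Real.log T) := by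
          refine mul_le_mul_of_nonneg_left (le_trans hls hlog4) (by linarith)
  have := Real.le_sqrt_of_sq_le hkey
  calc ∑ t ∈ Finset.range T, c t / Real.sqrt (1 + ∑ τ ∈ Finset.range (t + 1), c τ ^ 2)
      ≤ Real.sqrt ((T:ℝ) * (25 * Real.log T)) := this
    _ = 5 * Real.sqrt (Real.log T) * Real.sqrt T := by
        rw [Real.sqrt_mul (by linarith), Real.sqrt_mul (by norm_num : (0:ℝ) ≤ 25)]
        rw [show (25:ℝ) = 5 ^ 2 by norm_num, Real.sqrt_sq (by norm_num : (0:ℝ) ≤ 5)]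
        ring

theorem stmt_10 (T : ℕ) (hT : 2 ≤ T) (b : ℕ → ℝ)
    (hb : ∀ t ≤ T - 1, 0 ≤ b t ∧ b t ≤ 1) :
    ∑ t ∈ Finset.range T,
        alpha t * b t / Real.sqrt (1 + ∑ τ ∈ Finset.range (t + 1), alpha τ ^ 2 * b τ ^ 2) ≤
      5 * Real.sqrt (Real.log T) * Real.sqrt T := by
  have halpha_nonneg : ∀ t, 0 ≤ alpha t := by
    intro t; unfold alpha; split <;> positivity
  have halpha_le : ∀ t : ℕ, alpha t ≤ (t : ℝ) + 1 := by
    intro t; unfold alpha; split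
    · linarith [Nat.cast_nonneg (α := ℝ) t]
    · linarith [Nat.cast_nonneg (α := ℝ) t]
  have hb' : ∀ t < T, 0 ≤ b t ∧ b t ≤ 1 := by
    intro t ht; exact hb t (by omega)
  have hc : ∀ t < T, 0 ≤ alpha t * b t := fun t ht =>
    mul_nonneg (halpha_nonneg t) (hb' t ht).1
  have hbound : ∀ t < T, alpha t * b t ≤ (T : ℝ) := by
    intro t ht
    have h1 : alpha t * b t ≤ alpha t * 1 :=
      mul_le_mul_of_nonneg_left (hb' t ht).2 (halpha_nonneg t)
    have h2 : (t : ℝ) + 1 ≤ (T : ℝ) := by exact_mod_cast Nat.succ_le_of_lt ht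
    calc alpha t * b t ≤ alpha t * 1 := h1
      _ = alpha t := mul_one _
      _ ≤ (t : ℝ) + 1 := halpha_le t
      _ ≤ (T : ℝ) := h2
  have := main_lem T hT (fun t => alpha t * b t) hc hbound
  simpa only [mul_pow] using this
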